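/- Let A be a C*-algebra, and let a, b ∈ A be positive elements such that ‖a^{1/2} b a^{1/2} − a‖ < ε for some ε > 0. Then there exists x ∈ A such that (a − ε)₊ = x*x and xx* lies in the set b^{1/2} A b^{1/2} = { b^{1/2} c b^{1/2} : c ∈ A }. -/

import Mathlib

universe u

namespace RordamAux

variable {ε η ν M s u t : ℝ}

noncomputable def cutf (ε t : ℝ) : ℝ := max (t - ε) 0

noncomputable def phif (ε η t : ℝ) : ℝ := Real.sqrt (max (t - ε) 0 / max (t - ε + η) η)

lemma cutf_nonneg (ε t : ℝ) : 0 ≤ cutf ε t := le_max_right _ _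

lemma cutf_zero (hε : 0 < ε) : cutf ε 0 = 0 := by
  simp only [cutf]
  rw [max_eq_right (by linarith : (0:ℝ) - ε ≤ 0)]

lemma denom_pos (hη : 0 < η) (t : ℝ) : 0 < max (t - ε + η) η := lt_max_of_lt_right hη

lemma phif_sq (hη : 0 < η) (t : ℝ) :
    phif ε η t * phif ε η t = max (t - ε) 0 / max (t - ε + η) η := by
  rw [phif, Real.mul_self_sqrt]
  exact div_nonneg (le_max_right _ _) (denom_pos hη t).le

lemma phif_identity (hη : 0 < η) (t : ℝ) :
    phif ε η t * t * phif ε η t - (ε - η) * (phif ε η t * phif ε η t) = cutf ε t := by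
  have h : phif ε η t * t * phif ε η t - (ε - η) * (phif ε η t * phif ε η t)
      = (phif ε η t * phif ε η t) * (t - (ε - η)) := by ring
  rw [h, phif_sq hη]
  rcases le_or_gt t ε with ht | ht
  · rw [cutf, max_eq_right (by linarith : t - ε ≤ 0)]
    simp [max_eq_right (by linarith : t - ε ≤ 0)]
  · have h1 : max (t - ε) 0 = t - ε := max_eq_left (by linarith)
    have h2 : max (t - ε + η) η = t - ε + η := max_eq_left (by linarith)
    have h3 : t - ε + η ≠ 0 := ne_of_gt (by linarith)
    have h4 : t - (ε - η) = t - ε + η := by ring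
    rw [cutf, h1, h2, h4, div_mul_cancel₀ _ h3]

lemma phif_zero (hη : 0 < η) (hε : 0 < ε) : phif ε η 0 = 0 := by
  have h : max ((0:ℝ) - ε) 0 = 0 := max_eq_right (by linarith)
  rw [phif, h, zero_div, Real.sqrt_zero]

lemma continuous_cutf : Continuous (cutf ε) := by
  unfold cutf; fun_prop

lemma continuous_phif (hη : 0 < η) : Continuous (phif ε η) := by
  unfold phif
  apply Real.continuous_sqrt.comp
  exact Continuous.div (by fun_prop) (by fun_prop) (fun t => (denom_pos hη t).ne')

lemma gf_sq_bound (hη : 0 < η) {t : ℝ} (ht : 0 ≤ t) (htM : t ≤ M) :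
    (phif ε η t * Real.sqrt t) * (phif ε η t * Real.sqrt t) ≤ (M / η) * cutf ε t := by
  have hM : 0 ≤ M := ht.trans htM
  have h1 : (phif ε η t * Real.sqrt t) * (phif ε η t * Real.sqrt t)
      = (phif ε η t * phif ε η t) * (Real.sqrt t * Real.sqrt t) := by ring
  rw [h1, phif_sq hη, Real.mul_self_sqrt ht]
  rw [div_mul_eq_mul_div, mul_comm]
  rw [div_le_iff₀ (denom_pos hη t)]
  have hc := cutf_nonneg ε t
  have hd : η ≤ max (t - ε + η) η := le_max_right _ _
  calc t * max (t - ε) 0 ≤ M * max (t - ε) 0 := by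
        exact mul_le_mul_of_nonneg_right htM (le_max_right _ _)
    _ = (M * max (t - ε) 0 / η) * η := by field_simp
    _ ≤ M / η * cutf ε t * max (t - ε + η) η := by
        rw [cutf]
        have h5 : M * max (t - ε) 0 / η = M / η * max (t - ε) 0 := by ring
        rw [h5]
        apply mul_le_mul_of_nonneg_left hd
        positivity

noncomputable def fnf (s t : ℝ) : ℝ := Real.sqrt t / (max t 0 + s)

lemma fnf_zero (hs : 0 < s) : fnf s 0 = 0 := by simp [fnf]

lemma continuous_fnf (hs : 0 < s) : Continuous (fnf s) := by
  unfold fnf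
  exact Continuous.div (by fun_prop) (by fun_prop) (fun t => by positivity)

lemma cauchy_core (ht : 0 ≤ t) (hs : 0 < s) (hu : 0 < u) (hsu : s ≤ u) :
    t * ((fnf s t - fnf u t) * t * (fnf s t - fnf u t)) ≤ u := by
  have hmax : max t 0 = t := max_eq_left ht
  have hq : Real.sqrt t * Real.sqrt t = t := Real.mul_self_sqrt ht
  have h1 : fnf s t - fnf u t = Real.sqrt t * (u - s) / ((t + s) * (t + u)) := by
    rw [fnf, fnf, hmax]
    field_simp
    ring
  rw [h1]
  have hts : 0 < t + s := by linarith
  have htu : 0 < t + u := by linarith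
  have k1 : (u-s)*(u-s) ≤ u*u := by nlinarith
  have k2 : t*t ≤ (t+s)*(t+s) := by nlinarith
  have k3 : t*u ≤ (t+u)*(t+u) := by nlinarith
  have k4 : (t*t)*(t*u) ≤ ((t+s)*(t+s))*((t+u)*(t+u)) :=
    mul_le_mul k2 k3 (by positivity) (by positivity)
  have key : t * t * t * ((u-s) * (u-s)) ≤ u * (((t+s)*(t+u)) * ((t+s)*(t+u))) := by
    calc t * t * t * ((u-s) * (u-s)) ≤ t * t * t * (u*u) :=
          mul_le_mul_of_nonneg_left k1 (by positivity)
      _ = ((t*t)*(t*u))*u := by ring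
      _ ≤ (((t+s)*(t+s))*((t+u)*(t+u)))*u := mul_le_mul_of_nonneg_right k4 hu.le
      _ = u * (((t+s)*(t+u)) * ((t+s)*(t+u))) := by ring
  have expand : t * ((Real.sqrt t * (u - s) / ((t + s) * (t + u))) * t *
      (Real.sqrt t * (u - s) / ((t + s) * (t + u))))
      = (t * t * t * ((u-s)*(u-s))) / (((t+s)*(t+u)) * ((t+s)*(t+u))) := by
    field_simp
    linear_combination (t*t*((u-s)*(u-s))) * hq
  rw [expand, div_le_iff₀ (by positivity)]
  linarith [key]

lemma cauchy_nonneg (ht : 0 ≤ t) (F : ℝ) : 0 ≤ F * t * F := by nlinarith [sq_nonneg F]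

lemma conv_nonneg (ht : 0 ≤ t) (hs : 0 < s) :
    0 ≤ 1 - fnf s t * t * fnf s t := by
  have hmax : max t 0 = t := max_eq_left ht
  have hq : Real.sqrt t * Real.sqrt t = t := Real.mul_self_sqrt ht
  have h1 : fnf s t * t * fnf s t = t * t / ((t+s)*(t+s)) := by
    rw [fnf, hmax]; field_simp; linear_combination t * hq
  rw [h1]
  rw [sub_nonneg, div_le_one (by positivity)]
  nlinarith

lemma conv_bound (ht : 0 ≤ t) (hs : 0 < s) :
    t * (1 - fnf s t * t * fnf s t) ≤ 2 * s := by
  have hmax : max t 0 = t := max_eq_left ht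
  have hq : Real.sqrt t * Real.sqrt t = t := Real.mul_self_sqrt ht
  have h1 : fnf s t * t * fnf s t = t * t / ((t+s)*(t+s)) := by
    rw [fnf, hmax]; field_simp; linear_combination t * hq
  rw [h1]
  have hts : 0 < t + s := by linarith
  have h2 : t * (1 - t * t / ((t+s)*(t+s))) = t * ((t+s)*(t+s) - t*t) / ((t+s)*(t+s)) := by
    field_simp
  rw [h2, div_le_iff₀ (by positivity)]
  nlinarith [mul_nonneg ht hs.le, mul_nonneg (mul_nonneg ht ht) hs.le,
    mul_nonneg hs.le hs.le, mul_nonneg (mul_nonneg hs.le hs.le) hs.le]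

section CStar

variable {B : Type*} [CStarAlgebra B] [PartialOrder B] [StarOrderedRing B]

lemma smul_le_smul_nonneg {C : ℝ} (hC : 0 ≤ C) {x y : B} (h : x ≤ y) : C • x ≤ C • y := by
  rw [← sub_nonneg, ← smul_sub]
  have h0 : (0:B) ≤ y - x := sub_nonneg.2 h
  have key : C • (y - x) = star (Real.sqrt C • (1:B)) * (y - x) * (Real.sqrt C • (1:B)) := by
    rw [star_smul, star_one, star_trivial]
    rw [smul_mul_assoc, mul_smul_comm, smul_mul_assoc, one_mul, mul_one, smul_smul,
      Real.mul_self_sqrt hC]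
  rw [key]
  exact star_left_conjugate_nonneg h0 _

lemma sandwich_norm_le (e2 eD : B) (he2 : IsSelfAdjoint e2) (heD : 0 ≤ eD)
    (hee : e2 * e2 ≤ eD) (ψ : ℝ → ℝ) (hψc : Continuous ψ)
    {c : ℝ} (hc : 0 ≤ c) (hψ : ∀ t ∈ spectrum ℝ eD, 0 ≤ ψ t ∧ t * ψ t ≤ c) :
    ‖e2 * cfc ψ eD * e2‖ ≤ c := by
  have heDsa : IsSelfAdjoint eD := .of_nonneg heD
  set r := cfc (fun t => Real.sqrt (ψ t)) eD with hr
  have hrsa : IsSelfAdjoint r := cfc_predicate _ eD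
  have hrr : r * r = cfc ψ eD := by
    rw [hr, ← cfc_mul _ _ eD (by fun_prop) (by fun_prop)]
    exact cfc_congr fun t ht => Real.mul_self_sqrt (hψ t ht).1
  have key : e2 * cfc ψ eD * e2 = star (r * e2) * (r * e2) := by
    rw [star_mul, hrsa.star_eq, he2.star_eq, ← hrr]; simp [mul_assoc]
  have hnn : ‖star (r * e2) * (r * e2)‖ = ‖(r * e2) * star (r * e2)‖ := by
    rw [CStarRing.norm_star_mul_self, CStarRing.norm_self_mul_star]
  rw [key, hnn]
  have h2 : (r * e2) * star (r * e2) = r * (e2 * e2) * r := by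
    rw [star_mul, hrsa.star_eq, he2.star_eq]; simp [mul_assoc]
  have h3 : r * (e2 * e2) * r ≤ r * eD * r := by
    simpa only [hrsa.star_eq] using star_left_conjugate_le_conjugate hee r
  have h4 : ‖(r * e2) * star (r * e2)‖ ≤ ‖r * eD * r‖ := by
    rw [h2]
    exact CStarAlgebra.norm_le_norm_of_nonneg_of_le (h2 ▸ mul_star_self_nonneg (r * e2)) h3
  have h5 : r * eD * r = cfc (fun t => t * ψ t) eD := by
    conv_lhs => rw [← cfc_id ℝ eD, hr]
    rw [← cfc_mul _ _ eD (by fun_prop) (by fun_prop),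
      ← cfc_mul _ _ eD (by fun_prop) (by fun_prop)]
    refine cfc_congr fun t ht => ?_
    have hss := Real.mul_self_sqrt (hψ t ht).1
    simp only [id]
    linear_combination t * hss
  have h6 : ‖cfc (fun t => t * ψ t) eD‖ ≤ c := by
    refine norm_cfc_le hc fun t ht => ?_
    have h0t : (0:ℝ) ≤ t := spectrum_nonneg_of_nonneg heD ht
    rw [Real.norm_of_nonneg (mul_nonneg h0t (hψ t ht).1)]
    exact (hψ t ht).2
  calc ‖(r*e2) * star (r*e2)‖ ≤ ‖r * eD * r‖ := h4
    _ ≤ c := h5 ▸ h6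

end CStar

end RordamAux

/-- The positive square root `a^{1/2}` of a (positive) element of a C*-algebra, via the
continuous functional calculus. -/
noncomputable def cstarSqrt {A : Type u} [NonUnitalCStarAlgebra A] (a : A) : A :=
  cfcₙ (fun t : ℝ => Real.sqrt t) a

/-- The cut-down `(a - ε)₊` of a (positive) element of a C*-algebra, obtained by applying
the function `t ↦ max (t - ε) 0` via the continuous functional calculus. -/
noncomputable def cstarCutoff {A : Type u} [NonUnitalCStarAlgebra A] (ε : ℝ) (a : A) : A :=
  cfcₙ (fun t : ℝ => max (t - ε) 0) a


set_option maxHeartbeats 2000000 in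
open RordamAux Unitization Filter Topology in
/-- Lemma 3.15 of the paper.  Let `A` be a C*-algebra and `a, b ∈ A`
positive elements with `‖a^{1/2} b a^{1/2} - a‖ < ε`.  Then there exists `x ∈ A` such that
`(a - ε)₊ = x* x` and `x x*` lies in `b^{1/2} A b^{1/2}`. -/
theorem exists_factorization_of_cutoff {A : Type u} [NonUnitalCStarAlgebra A]
    (a b : A) (ha : ∃ y : A, a = star y * y) (hb : ∃ y : A, b = star y * y)
    (ε : ℝ) (hε : 0 < ε) (h : ‖cstarSqrt a * b * cstarSqrt a - a‖ < ε) :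
    ∃ x : A, cstarCutoff ε a = star x * x ∧
      ∃ c : A, x * star x = cstarSqrt b * c * cstarSqrt b := by
  letI : PartialOrder (Unitization ℂ A) := CStarAlgebra.spectralOrder _
  haveI : StarOrderedRing (Unitization ℂ A) := CStarAlgebra.spectralOrderedRing _
  obtain ⟨y, hy⟩ := ha
  obtain ⟨w, hw⟩ := hb
  have hcm : ∀ p q : A, ((p * q : A) : Unitization ℂ A) = (p : Unitization ℂ A) * (q : Unitization ℂ A) :=
    fun p q => Unitization.inr_mul ℂ p q
  have hcs : ∀ p : A, ((star p : A) : Unitization ℂ A) = star (p : Unitization ℂ A) :=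
    fun p => Unitization.inr_star p
  have hasa : IsSelfAdjoint a := hy ▸ IsSelfAdjoint.star_mul_self y
  have hbsa : IsSelfAdjoint b := hw ▸ IsSelfAdjoint.star_mul_self w
  -- constants
  set ν : ℝ := ‖cstarSqrt a * b * cstarSqrt a - a‖ with hν_def
  have hν : 0 ≤ ν := norm_nonneg _
  set η : ℝ := ε - ν with hη_def
  have hη : 0 < η := by rw [hη_def]; linarith
  set M : ℝ := ‖a‖ with hM_def
  have hM : 0 ≤ M := norm_nonneg _
  set C : ℝ := M / η with hC_def
  have hC : 0 ≤ C := div_nonneg hM hη.le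
  -- continuity facts
  have hφc : Continuous (phif ε η) := continuous_phif hη
  have hcutc : Continuous (cutf ε) := continuous_cutf
  have he2fc : Continuous (fun t => Real.sqrt (cutf ε t)) := Real.continuous_sqrt.comp hcutc
  have hgfc : Continuous (fun t => phif ε η t * Real.sqrt t) := hφc.mul Real.continuous_sqrt
  -- downstairs elements
  set sa : A := cstarSqrt a with hsa_def
  set sb : A := cstarSqrt b with hsb_def
  set e : A := cstarCutoff ε a with he_def
  set e2 : A := cfcₙ (fun t => Real.sqrt (cutf ε t)) a with he2_def
  set g : A := cfcₙ (fun t => phif ε η t * Real.sqrt t) a with hg_def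
  set D : A := g * b * g with hD_def
  have hgsa : IsSelfAdjoint g := cfcₙ_predicate _ a
  have he2sa : IsSelfAdjoint e2 := cfcₙ_predicate _ a
  have hsbsa : IsSelfAdjoint sb := cfcₙ_predicate _ b
  have hsasa : IsSelfAdjoint sa := cfcₙ_predicate _ a
  have hDsa : IsSelfAdjoint D := by
    rw [hD_def, IsSelfAdjoint, star_mul, star_mul, hgsa.star_eq, hbsa.star_eq, mul_assoc]
  -- upstairs elements
  set aU : Unitization ℂ A := (a : Unitization ℂ A) with haU_def
  set bU : Unitization ℂ A := (b : Unitization ℂ A) with hbU_def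
  set DU : Unitization ℂ A := (D : Unitization ℂ A) with hDU_def
  set E2 : Unitization ℂ A := (e2 : Unitization ℂ A) with hE2_def
  set G : Unitization ℂ A := (g : Unitization ℂ A) with hG_def
  have haUnn : (0:Unitization ℂ A) ≤ aU := by
    rw [haU_def, hy, hcm, hcs]; exact star_mul_self_nonneg _
  have hbUnn : (0:Unitization ℂ A) ≤ bU := by
    rw [hbU_def, hw, hcm, hcs]; exact star_mul_self_nonneg _
  have hDwg : D = star (w * g) * (w * g) := by
    rw [hD_def, hw, star_mul, hgsa.star_eq]; simp [mul_assoc]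
  have hDUnn : (0:Unitization ℂ A) ≤ DU := by
    rw [hDU_def, hDwg, hcm, hcs]; exact star_mul_self_nonneg _
  have haUsa : IsSelfAdjoint aU := by
    rw [haU_def, Unitization.isSelfAdjoint_inr (R := ℂ)]; exact hasa
  have hDUsa : IsSelfAdjoint DU := .of_nonneg hDUnn
  have hE2sa : IsSelfAdjoint E2 := by
    rw [hE2_def, Unitization.isSelfAdjoint_inr (R := ℂ)]; exact he2sa
  have hGsa : IsSelfAdjoint G := by
    rw [hG_def, Unitization.isSelfAdjoint_inr (R := ℂ)]; exact hgsa
  -- spectra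
  have hspecA : ∀ t ∈ spectrum ℝ aU, 0 ≤ t ∧ t ≤ M := by
    intro t ht
    refine ⟨spectrum_nonneg_of_nonneg haUnn ht, ?_⟩
    have h1 := spectrum.norm_le_norm_of_mem ht
    rw [Unitization.norm_inr] at h1
    exact le_trans (le_abs_self t) h1
  have hspecD : ∀ t ∈ spectrum ℝ DU, 0 ≤ t := fun t ht => spectrum_nonneg_of_nonneg hDUnn ht
  -- bridges from `A` to the unitization
  have hbr_cut : ((e : Unitization ℂ A)) = cfc (cutf ε) aU := by
    rw [he_def, cstarCutoff]
    exact Unitization.real_cfcₙ_eq_cfc_inr a _ (by simpa [cutf] using cutf_zero hε)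
  have hbr_e2 : E2 = cfc (fun t => Real.sqrt (cutf ε t)) aU := by
    rw [hE2_def, he2_def]
    exact Unitization.real_cfcₙ_eq_cfc_inr a _ (by rw [cutf_zero hε, Real.sqrt_zero])
  have hbr_g : G = cfc (fun t => phif ε η t * Real.sqrt t) aU := by
    rw [hG_def, hg_def]
    exact Unitization.real_cfcₙ_eq_cfc_inr a _ (by rw [phif_zero hη hε, zero_mul])
  have hbr_sa : ((sa : A) : Unitization ℂ A) = cfc Real.sqrt aU := by
    rw [hsa_def, cstarSqrt]
    exact Unitization.real_cfcₙ_eq_cfc_inr a _ Real.sqrt_zero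
  have hGBG : G * bU * G = DU := by
    rw [hDU_def, hD_def, hG_def, hbU_def, hcm, hcm]
  -- `E2 * E2` is the cutoff
  have hE2sq : E2 * E2 = cfc (cutf ε) aU := by
    rw [hbr_e2, ← cfc_mul _ _ aU he2fc.continuousOn he2fc.continuousOn]
    exact cfc_congr fun t _ => Real.mul_self_sqrt (cutf_nonneg ε t)
  -- Step 1 : cutoff ≤ DU
  have hstep1 : cfc (cutf ε) aU ≤ DU := by
    set dU : Unitization ℂ A := ((sa * b * sa : A) : Unitization ℂ A) with hdU_def
    have hdsa : IsSelfAdjoint (sa * b * sa) := by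
      rw [IsSelfAdjoint, star_mul, star_mul, hsasa.star_eq, hbsa.star_eq, mul_assoc]
    have hdUsa : IsSelfAdjoint dU := by
      rw [hdU_def, Unitization.isSelfAdjoint_inr (R := ℂ)]; exact hdsa
    have hnorm_sub : ‖aU - dU‖ = ν := by
      rw [haU_def, hdU_def, ← Unitization.inr_sub ℂ, Unitization.norm_inr, hν_def,
        norm_sub_rev, hsa_def]
    have h1 : aU - dU ≤ ν • 1 := by
      have h0 := (haUsa.sub hdUsa).le_algebraMap_norm_self
      rwa [hnorm_sub, Algebra.algebraMap_eq_smul_one] at h0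
    have h2 : aU - ν • 1 ≤ dU := sub_le_comm.mp h1
    set ΦU : Unitization ℂ A := cfc (phif ε η) aU with hΦ_def
    have hΦsa : IsSelfAdjoint ΦU := cfc_predicate _ aU
    have h3 : ΦU * (aU - ν • 1) * ΦU ≤ ΦU * dU * ΦU := by
      simpa only [hΦsa.star_eq] using star_left_conjugate_le_conjugate h2 ΦU
    have hLHS : ΦU * (aU - ν • 1) * ΦU = cfc (cutf ε) aU := by
      have hexp : ΦU * (aU - ν • 1) * ΦU = ΦU * aU * ΦU - ν • (ΦU * ΦU) := by
        simp [mul_sub, sub_mul, mul_smul_comm, smul_mul_assoc]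
      rw [hexp]
      have e1 : ΦU * aU * ΦU = cfc (fun t => phif ε η t * t * phif ε η t) aU := by
        conv_lhs => rw [← cfc_id' ℝ aU haUsa]
        rw [← cfc_mul _ _ aU hφc.continuousOn continuous_id'.continuousOn,
          ← cfc_mul (fun x => phif ε η x * x) _ aU (hφc.mul continuous_id').continuousOn hφc.continuousOn]
      have e2' : ΦU * ΦU = cfc (fun t => phif ε η t * phif ε η t) aU := by
        rw [← cfc_mul _ _ aU hφc.continuousOn hφc.continuousOn]
      have e3 : ν • cfc (fun t => phif ε η t * phif ε η t) aU
          = cfc (fun t => ν • (phif ε η t * phif ε η t)) aU := by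
        rw [cfc_smul ν (fun t => phif ε η t * phif ε η t) aU (hφc.mul hφc).continuousOn]
      have hc1 : Continuous fun t => phif ε η t * t * phif ε η t := by
        exact (hφc.mul continuous_id').mul hφc
      have hc2 : Continuous fun t => ν • (phif ε η t * phif ε η t) := by
        exact (hφc.mul hφc).const_smul ν
      rw [e1, e2', e3, ← cfc_sub _ _ aU hc1.continuousOn hc2.continuousOn]
      refine cfc_congr fun t _ => ?_
      have hid := phif_identity (ε := ε) hη t
      have hνeq : ε - η = ν := by rw [hη_def]; ring
      rw [smul_eq_mul, ← hνeq]
      exact hid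
    have hRHS : ΦU * dU * ΦU = DU := by
      have hdu : dU = ((sa : A) : Unitization ℂ A) * bU * ((sa : A) : Unitization ℂ A) := by
        rw [hdU_def, hbU_def, hcm, hcm]
      have hΦsaU : ΦU * ((sa : A) : Unitization ℂ A) = G := by
        rw [hbr_sa, hΦ_def, hbr_g, ← cfc_mul _ _ aU hφc.continuousOn
          Real.continuous_sqrt.continuousOn]
      have hsaUΦ : ((sa : A) : Unitization ℂ A) * ΦU = G := by
        rw [hbr_sa, hΦ_def, hbr_g, ← cfc_mul _ _ aU Real.continuous_sqrt.continuousOn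
          hφc.continuousOn]
        exact cfc_congr fun t _ => mul_comm _ _
      calc ΦU * dU * ΦU
          = (ΦU * ((sa : A) : Unitization ℂ A)) * bU * (((sa : A) : Unitization ℂ A) * ΦU) := by
            rw [hdu]; simp only [mul_assoc]
        _ = G * bU * G := by rw [hΦsaU, hsaUΦ]
        _ = DU := hGBG
    rw [← hLHS]
    exact h3.trans (le_of_eq hRHS)
  have hE2D : E2 * E2 ≤ DU := hE2sq ▸ hstep1
  -- Step 2 : G * G ≤ C • DU
  have hstep2 : G * G ≤ C • DU := by
    have h1 : G * G = cfc (fun t => (phif ε η t * Real.sqrt t) * (phif ε η t * Real.sqrt t)) aU := by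
      rw [hbr_g, ← cfc_mul _ _ aU hgfc.continuousOn hgfc.continuousOn]
    have h2 : cfc (fun t => (phif ε η t * Real.sqrt t) * (phif ε η t * Real.sqrt t)) aU
        ≤ cfc (fun t => C • cutf ε t) aU := by
      refine cfc_mono (fun t ht => ?_) (hgfc.mul hgfc).continuousOn
        ((hcutc.const_smul C).continuousOn)
      obtain ⟨h0t, htM⟩ := hspecA t ht
      simpa [smul_eq_mul, hC_def] using gf_sq_bound (M := M) hη h0t htM
    have h3 : cfc (fun t => C • cutf ε t) aU = C • cfc (cutf ε) aU :=
      cfc_smul C _ aU hcutc.continuousOn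
    calc G * G = _ := h1
      _ ≤ cfc (fun t => C • cutf ε t) aU := h2
      _ = C • cfc (cutf ε) aU := h3
      _ ≤ C • DU := smul_le_smul_nonneg hC hstep1
  -- the approximating sequence
  set un : ℕ → ℝ := fun n => 1 / (n + 1) with hun_def
  have hun : ∀ n, 0 < un n := fun n => by positivity
  have hun_anti : ∀ {n N : ℕ}, N ≤ n → un n ≤ un N := by
    intro n N hNn
    apply one_div_le_one_div_of_le (by positivity)
    have : (N : ℝ) ≤ n := Nat.cast_le.mpr hNn
    linarith
  set Z : ℕ → A := fun n => e2 * cfcₙ (fnf (un n)) D * g with hZ_def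
  have hbr_fn : ∀ n : ℕ, ((cfcₙ (fnf (un n)) D : A) : Unitization ℂ A) = cfc (fnf (un n)) DU :=
    fun n => Unitization.real_cfcₙ_eq_cfc_inr D _ (fnf_zero (hun n))
  -- Cauchy estimate
  have hZbound : ∀ n m : ℕ, ‖Z n - Z m‖ ^ 2 ≤ C * max (un n) (un m) := by
    intro n m
    have hsn := hun n
    have hsm := hun m
    have hFc : Continuous (fun t => fnf (un n) t - fnf (un m) t) :=
      (continuous_fnf hsn).sub (continuous_fnf hsm)
    have hzdiff : Z n - Z m = e2 * cfcₙ (fun t => fnf (un n) t - fnf (un m) t) D * g := by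
      rw [hZ_def]
      rw [cfcₙ_sub _ _ D (continuous_fnf hsn).continuousOn (fnf_zero hsn)
        (continuous_fnf hsm).continuousOn (fnf_zero hsm)]
      simp [mul_sub, sub_mul]
    have hFz : (fun t => fnf (un n) t - fnf (un m) t) 0 = 0 := by
      simp only [fnf_zero hsn, fnf_zero hsm, sub_zero]
    set X : Unitization ℂ A := cfc (fun t => fnf (un n) t - fnf (un m) t) DU with hX_def
    have hXsa : IsSelfAdjoint X := cfc_predicate _ DU
    have hbrF : ((cfcₙ (fun t => fnf (un n) t - fnf (un m) t) D : A) : Unitization ℂ A) = X :=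
      Unitization.real_cfcₙ_eq_cfc_inr D _ hFz
    have hcast : ((Z n - Z m : A) : Unitization ℂ A) = E2 * X * G := by
      rw [hzdiff, hcm, hcm, hbrF, hE2_def, hG_def]
    have hnormeq : ‖Z n - Z m‖ = ‖E2 * X * G‖ := by
      rw [← hcast, Unitization.norm_inr]
    set wel : Unitization ℂ A := E2 * X * G with hw_def
    have hstarw : star wel = G * X * E2 := by
      rw [hw_def, star_mul, star_mul, hE2sa.star_eq, hGsa.star_eq, hXsa.star_eq, mul_assoc]
    have hconj := star_left_conjugate_le_conjugate hstep2 (X * E2)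
    rw [star_mul, hXsa.star_eq, hE2sa.star_eq] at hconj
    have hkey : wel * star wel ≤ C • (E2 * (X * DU * X) * E2) := by
      calc wel * star wel = (E2 * X) * (G * G) * (X * E2) := by
            rw [hw_def, hstarw]; simp only [mul_assoc]
        _ ≤ (E2 * X) * (C • DU) * (X * E2) := hconj
        _ = C • (E2 * (X * DU * X) * E2) := by
            simp only [mul_smul_comm, smul_mul_assoc, mul_assoc]
    have hwnn : (0:Unitization ℂ A) ≤ wel * star wel := mul_star_self_nonneg wel
    have hXDX : X * DU * X
        = cfc (fun t => (fnf (un n) t - fnf (un m) t) * t * (fnf (un n) t - fnf (un m) t)) DU := by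
      conv_lhs => rw [← cfc_id' ℝ DU hDUsa]
      rw [hX_def, ← cfc_mul _ _ DU hFc.continuousOn continuous_id'.continuousOn,
        ← cfc_mul (fun x => (fnf (un n) x - fnf (un m) x) * x) _ DU (hFc.mul continuous_id').continuousOn hFc.continuousOn]
    have hsand : ‖E2 * cfc (fun t => (fnf (un n) t - fnf (un m) t) * t
        * (fnf (un n) t - fnf (un m) t)) DU * E2‖ ≤ max (un n) (un m) := by
      refine sandwich_norm_le E2 DU hE2sa hDUnn hE2D (fun t => (fnf (un n) t - fnf (un m) t) * t * (fnf (un n) t - fnf (un m) t)) ((hFc.mul continuous_id').mul hFc)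
        (le_trans hsn.le (le_max_left _ _)) (fun t ht => ?_)
      have h0t := hspecD t ht
      refine ⟨cauchy_nonneg h0t _, ?_⟩
      rcases le_total (un n) (un m) with hle | hle
      · exact (cauchy_core h0t hsn hsm hle).trans (le_max_right _ _)
      · have hswap : (fnf (un n) t - fnf (un m) t) * t * (fnf (un n) t - fnf (un m) t)
            = (fnf (un m) t - fnf (un n) t) * t * (fnf (un m) t - fnf (un n) t) := by ring
        rw [hswap]
        exact (cauchy_core h0t hsm hsn hle).trans (le_max_left _ _)
    have hsq : ‖Z n - Z m‖ ^ 2 = ‖wel * star wel‖ := by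
      rw [hnormeq, CStarRing.norm_self_mul_star, sq]
    rw [hsq]
    calc ‖wel * star wel‖ ≤ ‖C • (E2 * (X * DU * X) * E2)‖ :=
          CStarAlgebra.norm_le_norm_of_nonneg_of_le hwnn hkey
      _ = C * ‖E2 * (X * DU * X) * E2‖ := by
          rw [norm_smul, Real.norm_of_nonneg hC]
      _ ≤ C * max (un n) (un m) := by
          apply mul_le_mul_of_nonneg_left _ hC
          rw [hXDX]
          exact hsand
  -- Cauchy sequence
  have hZcauchy : CauchySeq Z := by
    apply cauchySeq_of_le_tendsto_0 (fun N => Real.sqrt (C * un N))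
    · intro n m N hn hm
      rw [dist_eq_norm]
      rw [Real.le_sqrt (norm_nonneg _) (by positivity)]
      calc ‖Z n - Z m‖ ^ 2 ≤ C * max (un n) (un m) := hZbound n m
        _ ≤ C * un N := by
            apply mul_le_mul_of_nonneg_left _ hC
            exact max_le (hun_anti hn) (hun_anti hm)
    · have h1 : Tendsto un atTop (𝓝 0) := by
        rw [hun_def]
        exact tendsto_one_div_add_atTop_nhds_zero_nat
      have h2 : Tendsto (fun N => C * un N) atTop (𝓝 (C * 0)) := h1.const_mul C
      rw [mul_zero] at h2
      have h3 := (Real.continuous_sqrt.tendsto 0).comp h2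
      simpa [Real.sqrt_zero, Function.comp_def] using h3
  obtain ⟨z, hz⟩ := cauchySeq_tendsto_of_complete hZcauchy
  -- convergence of the conjugates
  have hconv : ∀ n : ℕ, ‖e - Z n * b * star (Z n)‖ ≤ 2 * un n := by
    intro n
    have hsn := hun n
    have hFc := continuous_fnf hsn
    have hFnsa : IsSelfAdjoint (cfcₙ (fnf (un n)) D) := cfcₙ_predicate _ D
    set XU : Unitization ℂ A := cfc (fnf (un n)) DU with hXU_def
    have hXUsa : IsSelfAdjoint XU := cfc_predicate _ DU
    have hstarZ : star (Z n) = g * cfcₙ (fnf (un n)) D * e2 := by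
      rw [hZ_def, star_mul, star_mul, hgsa.star_eq, he2sa.star_eq, hFnsa.star_eq, mul_assoc]
    have hcast : ((e - Z n * b * star (Z n) : A) : Unitization ℂ A)
        = E2 * cfc (fun t => 1 - fnf (un n) t * t * fnf (un n) t) DU * E2 := by
      have hkn : XU * DU * XU = cfc (fun t => fnf (un n) t * t * fnf (un n) t) DU := by
        conv_lhs => rw [← cfc_id' ℝ DU hDUsa]
        rw [hXU_def, ← cfc_mul _ _ DU hFc.continuousOn continuous_id'.continuousOn,
          ← cfc_mul (fun x => fnf (un n) x * x) _ DU (hFc.mul continuous_id').continuousOn hFc.continuousOn]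
      have h1m : (1 : Unitization ℂ A) - cfc (fun t => fnf (un n) t * t * fnf (un n) t) DU
          = cfc (fun t => 1 - fnf (un n) t * t * fnf (un n) t) DU := by
        rw [cfc_sub (fun _ => (1:ℝ)) (fun t => fnf (un n) t * t * fnf (un n) t) DU continuousOn_const ((hFc.mul continuous_id').mul hFc).continuousOn,
          cfc_const_one ℝ DU]
      rw [hstarZ, hZ_def]
      rw [Unitization.inr_sub ℂ]
      simp only [hcm]
      rw [hbr_fn n, hbr_cut, ← hE2sq, hE2_def]
      rw [← h1m, ← hkn]
      rw [hG_def, hbU_def] at hGBG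
      calc (e2 : Unitization ℂ A) * (e2 : Unitization ℂ A)
            - (e2 : Unitization ℂ A) * XU * (g : Unitization ℂ A) * (b : Unitization ℂ A)
              * ((g : Unitization ℂ A) * XU * (e2 : Unitization ℂ A))
          = (e2 : Unitization ℂ A) * (e2 : Unitization ℂ A)
            - (e2 : Unitization ℂ A) * (XU * ((g : Unitization ℂ A) * (b : Unitization ℂ A)
              * (g : Unitization ℂ A)) * XU) * (e2 : Unitization ℂ A) := by
            simp only [mul_assoc]
        _ = (e2 : Unitization ℂ A) * (1 - XU * DU * XU) * (e2 : Unitization ℂ A) := by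
            rw [hGBG]
            simp only [mul_sub, sub_mul, mul_one, one_mul, mul_assoc]
    have hneq : ‖e - Z n * b * star (Z n)‖
        = ‖E2 * cfc (fun t => 1 - fnf (un n) t * t * fnf (un n) t) DU * E2‖ := by
      rw [← Unitization.norm_inr (𝕜 := ℂ) (e - Z n * b * star (Z n)), hcast]
    rw [hneq]
    refine sandwich_norm_le E2 DU hE2sa hDUnn hE2D _
      (continuous_const.sub ((hFc.mul continuous_id').mul hFc)) (by positivity) (fun t ht => ?_)
    have h0t := hspecD t ht
    exact ⟨conv_nonneg h0t hsn, conv_bound h0t hsn⟩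
  -- pass to the limit
  have hlim1 : Tendsto (fun n => Z n * b * star (Z n)) atTop (𝓝 (z * b * star z)) :=
    (hz.mul_const b).mul hz.star
  have hlim2 : Tendsto (fun n => Z n * b * star (Z n)) atTop (𝓝 e) := by
    rw [tendsto_iff_norm_sub_tendsto_zero]
    have hb0 : Tendsto (fun n : ℕ => 2 * un n) atTop (𝓝 0) := by
      have h1 : Tendsto un atTop (𝓝 0) := by
        rw [hun_def]; exact tendsto_one_div_add_atTop_nhds_zero_nat
      have h2 : Tendsto (fun n : ℕ => 2 * un n) atTop (𝓝 (2 * 0)) := h1.const_mul 2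
      rwa [mul_zero] at h2
    refine squeeze_zero (fun n => norm_nonneg _) (fun n => ?_) hb0
    rw [norm_sub_rev]
    exact hconv n
  have hzbz : z * b * star z = e := tendsto_nhds_unique hlim1 hlim2
  -- square root of b
  have hqb : ∀ t ∈ quasispectrum ℝ b, 0 ≤ t := by
    intro t ht
    rw [Unitization.quasispectrum_eq_spectrum_inr' ℝ ℂ b] at ht
    exact spectrum_nonneg_of_nonneg hbUnn ht
  have hsb2 : sb * sb = b := by
    rw [hsb_def, cstarSqrt,
      ← cfcₙ_mul _ _ b Real.continuous_sqrt.continuousOn Real.sqrt_zero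
        Real.continuous_sqrt.continuousOn Real.sqrt_zero]
    have h1 : cfcₙ (fun t : ℝ => Real.sqrt t * Real.sqrt t) b = cfcₙ (fun t : ℝ => t) b :=
      cfcₙ_congr fun t ht => Real.mul_self_sqrt (hqb t ht)
    rw [h1, cfcₙ_id' ℝ b]
  -- final assembly
  refine ⟨sb * star z, ?_, star z * z, ?_⟩
  · rw [star_mul, star_star, hsbsa.star_eq, ← hzbz]
    rw [show z * sb * (sb * star z) = z * (sb * sb) * star z by simp only [mul_assoc], hsb2]
  · rw [star_mul, star_star, hsbsa.star_eq]
    simp only [mul_assoc]
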